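/- Let g be a finite simple Lie algebra of type A_n, B_n, C_n, D_{n+1}, or G_2, let a ∈ I, and let (ν,J) ∈ RC^{EV}. Then f_a(ν,J) ≠ 0; that is, applying the lowering operator f_a to an extra valid rigged configuration (ν,J) ∈ RC(λ) produces a rigged configuration that is still valid for λ. -/

import Mathlib

/-!
Common framework for formalizing "Connecting marginally large tableaux and
rigged configurations via crystals" (Salisbury–Scrimshaw).

Rigged configurations, vacancy numbers, validity, the Kashiwara operators on
rigged configurations, `RC(∞)`, `RC(λ)`, `λ_ν`, `RC^V`, `RC^{EV}` are all
defined concretely.  The combinatorics of (marginally large / large)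
tableaux, Kirillov–Reshetikhin crystals `B^{⊗λ}`, and the
Kerov–Kirillov–Reshetikhin style bijection `Φ` (whose algorithmic definition
via `δ` is far beyond the scope of this file) are packaged abstractly in the
structure `KRSetup`, whose fields record the previously–known properties of
these objects (`Φ` is a shape-preserving bijection between rigged
configurations valid for `λ` and elements of `B^{⊗λ}`, and is a classical
crystal isomorphism).
-/

namespace RCMLT

/-- The five families of finite simple Lie algebras considered in the paper:
`A n` is `A_n`, `B n` is `B_n`, `C n` is `C_n`, `D n` is `D_{n+1}`, and `G` is `G_2`. -/
inductive GType : Type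
  | A (n : ℕ)
  | B (n : ℕ)
  | C (n : ℕ)
  | D (n : ℕ)   -- this stands for `D_{n+1}`
  | G
deriving DecidableEq

/-- The number of nodes of the Dynkin diagram, so that the index set is
`I = Fin (rank g)` (the element `a : Fin (rank g)` represents the node `a+1`
in the paper's indexing). -/
def rank : GType → ℕ
  | .A n => n
  | .B n => n
  | .C n => n
  | .D n => n + 1
  | .G => 2

/-- Entries of the Cartan matrix of a simply laced chain (type `A`). -/
def chainE (a b : ℕ) : ℤ :=
  if a = b then 2 else if a + 1 = b ∨ b + 1 = a then -1 else 0

/-- The Cartan matrix `A_{ab} = ⟨h_a, α_b⟩` of `g`. -/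
def cartan : (g : GType) → Fin (rank g) → Fin (rank g) → ℤ
  | .A _, a, b => chainE a.val b.val
  | .B n, a, b => if a.val = n - 1 ∧ b.val = n - 2 ∧ 2 ≤ n then -2 else chainE a.val b.val
  | .C n, a, b => if a.val = n - 2 ∧ b.val = n - 1 ∧ 2 ≤ n then -2 else chainE a.val b.val
  | .D n, a, b =>
      if ((a.val = n - 2 ∧ b.val = n) ∨ (a.val = n ∧ b.val = n - 2)) ∧ 2 ≤ n then -1
      else if a.val = n ∨ b.val = n then (if a = b then 2 else 0)
      else chainE a.val b.val
  | .G, a, b => if a = b then 2 else if a.val = 0 then -3 else -1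

/-- Integral weights, written in the coordinates of the fundamental weights:
`λ : Wt g` stands for `Σ_a (λ a) Λ_a`, so that `⟨h_a, λ⟩ = λ a`. -/
abbrev Wt (g : GType) := Fin (rank g) → ℤ

/-- A rigged configuration `(ν, J)`: for each node `a`, the multiset of
strings `(i, x)` (a part of length `i` of the partition `ν^{(a)}` together
with its rigging `x`) of `(ν, J)^{(a)}`. -/
abbrev Cfg (g : GType) := Fin (rank g) → Multiset (ℕ × ℤ)

/-- The empty rigged configuration `(ν_∅, J_∅)`. -/
def emptyCfg (g : GType) : Cfg g := fun _ => 0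

/-- The coordinate vector of the fundamental weight `Λ_r`. -/
def fw (g : GType) (r : Fin (rank g)) : Wt g := fun b => if b = r then 1 else 0

/-- `λ` is dominant: all coefficients in the fundamental weights are `≥ 0`. -/
def Dominant (g : GType) (lam : Wt g) : Prop := ∀ a, 0 ≤ lam a

/-- `|ν^{(a)}|`, the number of boxes of the partition recorded by `m`. -/
def psize (m : Multiset (ℕ × ℤ)) : ℤ := (m.map fun s => (s.1 : ℤ)).sum

/-- The vacancy numbers
`p_i^{(a)}(ν; λ) = ⟨h_a, λ⟩ − Σ_{(b,j)} A_{ab} min(i,j) m_j^{(b)}`. -/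
def vac (g : GType) (lam : Wt g) (ν : Cfg g) (a : Fin (rank g)) (i : ℕ) : ℤ :=
  lam a - ∑ b, cartan g a b * ((ν b).map fun s => ((min i s.1 : ℕ) : ℤ)).sum

/-- `(ν, J)` is valid for `λ`: every rigging `x` of a string of length `i` in
`ν^{(a)}` satisfies `x ≤ p_i^{(a)}(ν; λ)`. -/
def Valid (g : GType) (lam : Wt g) (ν : Cfg g) : Prop :=
  ∀ a : Fin (rank g), ∀ s ∈ ν a, s.2 ≤ vac g lam ν a s.1

/-- The Kashiwara lowering operator `f_a` on rigged configurations, as a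
relation: `fRel g a ν ν'` holds iff `f_a (ν, J) = (ν', J')`.  Let `x` be the
smallest rigging in `(ν,J)^{(a)}`.  If `x > 0` (in particular if `ν^{(a)}` is
empty) a string `(1, -1)` is added; otherwise a string `(ℓ, x)` with `ℓ`
maximal is replaced by `(ℓ+1, x-1)`.  All the other riggings are changed so
that all colabels `p_i^{(b)} − x` remain fixed (the colabel differences do
not depend on the weight, so they are computed at weight `0`). -/
def fRel (g : GType) (a : Fin (rank g)) (ν ν' : Cfg g) : Prop :=
  ((∀ s ∈ ν a, 0 < s.2) ∧
     (∀ b, b ≠ a →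
       ν' b = (ν b).map fun s =>
         (s.1, s.2 + vac g (0 : Wt g) ν' b s.1 - vac g (0 : Wt g) ν b s.1)) ∧
     ν' a = (1, -1) ::ₘ ((ν a).map fun s =>
         (s.1, s.2 + vac g (0 : Wt g) ν' a s.1 - vac g (0 : Wt g) ν a s.1))) ∨
  (∃ (l : ℕ) (x : ℤ) (rest : Multiset (ℕ × ℤ)),
     x ≤ 0 ∧ ν a = (l, x) ::ₘ rest ∧
     (∀ s ∈ ν a, x ≤ s.2) ∧ (∀ s ∈ ν a, s.2 = x → s.1 ≤ l) ∧
     (∀ b, b ≠ a →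
       ν' b = (ν b).map fun s =>
         (s.1, s.2 + vac g (0 : Wt g) ν' b s.1 - vac g (0 : Wt g) ν b s.1)) ∧
     ν' a = (l + 1, x - 1) ::ₘ (rest.map fun s =>
         (s.1, s.2 + vac g (0 : Wt g) ν' a s.1 - vac g (0 : Wt g) ν a s.1)))

/-- The Kashiwara raising operator `e_a` on rigged configurations, as a
relation: `eRel g a ν ν'` holds iff `e_a (ν, J) = (ν', J') ≠ 0`.  If the
smallest rigging `x` in `(ν,J)^{(a)}` satisfies `x ≥ 0` then `e_a (ν,J) = 0`
(so no `ν'` is related to `ν`); otherwise a string `(ℓ, x)` with `ℓ` minimal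
is replaced by `(ℓ-1, x+1)` (removed if `ℓ = 1`), and all the other riggings
are changed so that all colabels remain fixed. -/
def eRel (g : GType) (a : Fin (rank g)) (ν ν' : Cfg g) : Prop :=
  ∃ (l : ℕ) (x : ℤ) (rest : Multiset (ℕ × ℤ)),
    x < 0 ∧ ν a = (l, x) ::ₘ rest ∧
    (∀ s ∈ ν a, x ≤ s.2) ∧ (∀ s ∈ ν a, s.2 = x → l ≤ s.1) ∧
    (∀ b, b ≠ a →
      ν' b = (ν b).map fun s =>
        (s.1, s.2 + vac g (0 : Wt g) ν' b s.1 - vac g (0 : Wt g) ν b s.1)) ∧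
    ν' a = (if l = 1 then (0 : Multiset (ℕ × ℤ)) else {(l - 1, x + 1)}) +
      (rest.map fun s =>
        (s.1, s.2 + vac g (0 : Wt g) ν' a s.1 - vac g (0 : Wt g) ν a s.1))

/-- `RC(∞)`: the set of rigged configurations generated from the empty rigged
configuration by the operators `f_a`. -/
inductive RCInf (g : GType) : Cfg g → Prop
  | empty : RCInf g (emptyCfg g)
  | step {a : Fin (rank g)} {ν ν' : Cfg g} : RCInf g ν → fRel g a ν ν' → RCInf g ν'

/-- `RC(λ)`: the closure of the empty rigged configuration under the modified
operators `f_a`, where `f_a (ν, J) = 0` whenever the result is not valid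
for `λ`. -/
inductive RCPoly (g : GType) (lam : Wt g) : Cfg g → Prop
  | empty : RCPoly g lam (emptyCfg g)
  | step {a : Fin (rank g)} {ν ν' : Cfg g} :
      RCPoly g lam ν → fRel g a ν ν' → Valid g lam ν' → RCPoly g lam ν'

/-- The dominant weight `λ_ν`:
`λ_ν = Σ_{a < n} (|ν^{(a)}|+1) Λ_a + λ_ν^{(n)}`, where the last part is
`2(|ν^{(n)}|+1) Λ_n` in type `B_n`,
`(max(|ν^{(n)}|, |ν^{(n+1)}|)+1)(Λ_n + Λ_{n+1})` in type `D_{n+1}`, and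
`(|ν^{(n)}|+1) Λ_n` otherwise. -/
def lambdaNu : (g : GType) → Cfg g → Wt g
  | .A _, ν => fun a => psize (ν a) + 1
  | .B n, ν => fun a => if a.val = n - 1 then 2 * (psize (ν a) + 1) else psize (ν a) + 1
  | .C _, ν => fun a => psize (ν a) + 1
  | .D n, ν => fun a =>
      if a.val = n - 1 ∨ a.val = n then
        max (psize (ν ⟨n - 1, by simp only [rank]; omega⟩))
            (psize (ν ⟨n, by simp only [rank]; omega⟩)) + 1
      else psize (ν a) + 1
  | .G, ν => fun a => psize (ν a) + 1

/-- `(ν, J, λ) ∈ RC^{EV}`: the representative `(ν, J)` lies in `RC(λ)` for a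
dominant weight `λ ≥ λ_ν` (componentwise in the fundamental-weight
coordinates). -/
def RCEV (g : GType) (ν : Cfg g) (lam : Wt g) : Prop :=
  Dominant g lam ∧ RCPoly g lam ν ∧ ∀ a, lambdaNu g ν a ≤ lam a

/-- The coordinates of `wt (ν, J) = −Σ_a |ν^{(a)}| α_a`:
`⟨h_b, wt (ν, J)⟩ = −Σ_a |ν^{(a)}| A_{ba}`. -/
def wtRC (g : GType) (ν : Cfg g) (b : Fin (rank g)) : ℤ :=
  -∑ a, psize (ν a) * cartan g b a

/-- `k`-fold iteration of the raising operator `e_a`. -/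
def eIter (g : GType) (a : Fin (rank g)) : ℕ → Cfg g → Cfg g → Prop
  | 0, ν, ν' => ν' = ν
  | k + 1, ν, ν'' => ∃ ν', eRel g a ν ν' ∧ eIter g a k ν' ν''

/-- `ε_a (ν, J) = max {k ≥ 0 | e_a^k (ν, J) ≠ 0}`. -/
noncomputable def epsRC (g : GType) (a : Fin (rank g)) (ν : Cfg g) : ℕ :=
  sSup {k : ℕ | ∃ μ, eIter g a k ν μ}

/-- `φ_a (ν, J) = ε_a (ν, J) + ⟨h_a, wt (ν, J)⟩`. -/
noncomputable def phiRC (g : GType) (a : Fin (rank g)) (ν : Cfg g) : ℤ :=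
  (epsRC g a ν : ℤ) + wtRC g ν a

/-- An abstract `U_q(g)`-crystal structure on a set `B`: maps
`e_a, f_a : B → B ⊔ {0}`, `ε_a, φ_a : B → ℤ` and `wt : B → P` (in
fundamental-weight coordinates) such that (1) `f_a b = b'` iff `b = e_a b'`;
(2) `wt (f_a b) = wt b − α_a` when `f_a b ≠ 0`; (3) `φ_a − ε_a = ⟨h_a, wt⟩`. -/
structure CrystalStruct (g : GType) (B : Type) where
  e : Fin (rank g) → B → Option B
  f : Fin (rank g) → B → Option B
  wt : B → Wt g
  eps : Fin (rank g) → B → ℤ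
  phi : Fin (rank g) → B → ℤ
  ef_iff : ∀ a b b', f a b = some b' ↔ e a b' = some b
  wt_f : ∀ a b b', f a b = some b' → ∀ c, wt b' c = wt b c - cartan g c a
  phi_eps : ∀ a b, phi a b - eps a b = wt b a

/-- Abstract packaging of the tableaux models (`⊔_{λ} B^{⊗λ}`, the large,
marginally large and semistandard tableaux inside it, basic columns) together
with the bijection `Φ : RC(B^{⊗λ}) → B^{⊗λ}` of
Kerov–Kirillov–Reshetikhin/Okado–Schilling–Shimozono type and its previously
known properties (it is a shape-preserving bijection and a classical crystal
isomorphism), and the marginally large tableaux crystal operators of `T(∞)`. -/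
structure KRSetup (g : GType) where
  /-- elements of `⊔_{λ ∈ P̂⁺} B^{⊗λ}` (tensor products of columns). -/
  Tab : Type
  /-- the weight `λ` with `t ∈ B^{⊗λ}`; for a tableau, its shape. -/
  shape : Tab → Wt g
  /-- the classical crystal operator `f_a` on `B^{⊗λ}`. -/
  ftab : Fin (rank g) → Tab → Option Tab
  /-- the classical crystal operator `e_a` on `B^{⊗λ}`. -/
  etab : Fin (rank g) → Tab → Option Tab
  /-- `t` is (the column reading of) a semistandard tableau. -/
  IsTableau : Tab → Prop
  /-- `t` is a large tableau. -/
  Large : Tab → Prop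
  /-- `t` is a marginally large tableau. -/
  MarginallyLarge : Tab → Prop
  /-- `t` and `t'` differ only by basic columns. -/
  BasicEquiv : Tab → Tab → Prop
  basicEquiv_equiv : Equivalence BasicEquiv
  ml_large : ∀ t, MarginallyLarge t → Large t
  /-- the highest weight tableau `T_λ` (a tensor product of basic columns). -/
  highest : Wt g → Tab
  highest_shape : ∀ lam, shape (highest lam) = lam
  highest_tab : ∀ lam, IsTableau (highest lam)
  /-- insertion of one additional basic column of height `r`. -/
  addBasic : Fin (rank g) → Tab → Tab
  addBasic_shape : ∀ r t, shape (addBasic r t) = shape t + fw g r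
  addBasic_equiv : ∀ r t, BasicEquiv (addBasic r t) t
  /-- the bijection `Φ : RC(B^{⊗λ}) → B^{⊗λ}`. -/
  Phi : Wt g → Cfg g → Tab
  /-- the inverse bijection `Φ⁻¹ : B^{⊗λ} → RC(B^{⊗λ})`. -/
  PhiInv : Wt g → Tab → Cfg g
  phi_shape : ∀ lam ν, Valid g lam ν → shape (Phi lam ν) = lam
  phiInv_valid : ∀ lam t, shape t = lam → Valid g lam (PhiInv lam t)
  phi_left_inv : ∀ lam ν, Valid g lam ν → PhiInv lam (Phi lam ν) = ν
  phi_right_inv : ∀ lam t, shape t = lam → Phi lam (PhiInv lam t) = t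
  /-- `Φ` is a classical crystal isomorphism (Theorem 4.6 of the paper). -/
  phi_f : ∀ lam a ν ν', Valid g lam ν → fRel g a ν ν' → Valid g lam ν' →
      ftab a (Phi lam ν) = some (Phi lam ν')
  phi_f_none : ∀ lam a ν ν', Valid g lam ν → fRel g a ν ν' → ¬ Valid g lam ν' →
      ftab a (Phi lam ν) = none
  phi_e : ∀ lam a ν ν', Valid g lam ν → eRel g a ν ν' →
      etab a (Phi lam ν) = some (Phi lam ν')
  phi_e_none : ∀ lam a ν, Valid g lam ν → ¬(∃ ν', eRel g a ν ν') →
      etab a (Phi lam ν) = none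
  /-- the (total) lowering operator `f_a` of the marginally large tableaux
  model `T(∞)`. -/
  fml : Fin (rank g) → Tab → Tab
  /-- the raising operator `e_a` of the marginally large tableaux model. -/
  eml : Fin (rank g) → Tab → Option Tab
  /-- the weight function of the marginally large tableaux model. -/
  wtml : Tab → Wt g
  epsml : Fin (rank g) → Tab → ℤ
  phiml : Fin (rank g) → Tab → ℤ
  /-- `f_a` on `T(∞)` agrees, up to basic columns, with `f_a` computed on a
  suitable large representative (Lemma 3.2 of Hong–Lee). -/
  fml_spec : ∀ a T, IsTableau T → MarginallyLarge T →
      MarginallyLarge (fml a T) ∧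
      ∃ T₁ T₂, BasicEquiv T₁ T ∧ ftab a T₁ = some T₂ ∧ BasicEquiv T₂ (fml a T)
  eml_spec : ∀ a T T', IsTableau T → MarginallyLarge T → eml a T = some T' →
      MarginallyLarge T' ∧
      ∃ T₁ T₂, BasicEquiv T₁ T ∧ etab a T₁ = some T₂ ∧ BasicEquiv T₂ T'
  phiml_eps : ∀ a T, phiml a T - epsml a T = wtml T a
  wtml_fml : ∀ a T c, wtml (fml a T) c = wtml T c - cartan g c a

/-- The map `Ψ : RC(∞) → T(∞)`: project `(ν, J)` to `RC(λ_ν)`, apply `Φ`,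
and regard the result as a marginally large tableau. -/
def KRSetup.Psi {g : GType} (S : KRSetup g) (ν : Cfg g) : S.Tab :=
  S.Phi (lambdaNu g ν) ν

/-- The map `Ξ : T(∞) → RC(∞)`: project `T` to `T(λ_T)` (where `λ_T` is the
shape of `T`), embed it in `B^{⊗λ_T}` as the tensor product of its columns,
and apply `Φ⁻¹`. -/
def KRSetup.Xi {g : GType} (S : KRSetup g) (T : S.Tab) : Cfg g :=
  S.PhiInv (S.shape T) T

/-- The connected component of `B^{⊗λ}` generated by the highest weight
element `T_λ`, i.e. the embedded copy of `T(λ)`. -/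
inductive TabGen {g : GType} (S : KRSetup g) (lam : Wt g) : S.Tab → Prop
  | base : TabGen S lam (S.highest lam)
  | step {a : Fin (rank g)} {T T' : S.Tab} :
      TabGen S lam T → S.ftab a T = some T' → TabGen S lam T'

/-- An abstract family of highest weight crystals `B(λ)` together with the
natural projections `p : B(λ) → B(μ) ⊔ {0}`, `f_{a_k} ⋯ f_{a_1} u_λ ↦
f_{a_k} ⋯ f_{a_1} u_μ`. -/
structure HWFamily (g : GType) where
  B : Wt g → Type
  crys : ∀ lam, CrystalStruct g (B lam)
  /-- the highest weight element `u_λ`. -/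
  hw : ∀ lam, B lam
  hw_e : ∀ lam a, (crys lam).e a (hw lam) = none
  hw_wt : ∀ lam, (crys lam).wt (hw lam) = lam
  /-- the natural projection `B(λ) → B(μ) ⊔ {0}`. -/
  proj : ∀ lam mu, B lam → Option (B mu)
  proj_hw : ∀ lam mu, proj lam mu (hw lam) = some (hw mu)
  proj_f : ∀ lam mu a b b', (crys lam).f a b = some b' →
      proj lam mu b' = ((proj lam mu b).bind ((crys mu).f a))

/-- An abstract model of `B(∞)` together with a family of highest weight
crystals `B(λ)` and the natural projections `B(∞) → B(λ) ⊔ {0}`. -/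
structure BInfSetup (g : GType) extends HWFamily g where
  Binf : Type
  icrys : CrystalStruct g Binf
  /-- the highest weight element `u_∞`. -/
  uinf : Binf
  uinf_e : ∀ a, icrys.e a uinf = none
  uinf_wt : ∀ b, icrys.wt uinf b = 0
  /-- the natural projection `B(∞) → B(λ) ⊔ {0}`. -/
  projInf : ∀ lam, Binf → Option (B lam)
  projInf_hw : ∀ lam, projInf lam uinf = some (hw lam)
  projInf_f : ∀ lam a b b', icrys.f a b = some b' →
      projInf lam b' = ((projInf lam b).bind ((crys lam).f a))



/-! ### Auxiliary development for Statement 4 -/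

section Statement4Aux

private lemma cartan_diag (g : GType) (a : Fin (rank g)) : cartan g a a = 2 := by
  cases g with
  | A n => simp [cartan, chainE]
  | B n =>
      simp only [cartan]
      rw [if_neg (by rintro ⟨h1, h2, h3⟩; omega)]
      simp [chainE]
  | C n =>
      simp only [cartan]
      rw [if_neg (by rintro ⟨h1, h2, h3⟩; omega)]
      simp [chainE]
  | D n =>
      simp only [cartan]
      rw [if_neg (by rintro ⟨h1 | h1, h2⟩ <;> omega)]
      by_cases h : a.val = n
      · rw [if_pos (Or.inl h)]; simp
      · rw [if_neg (by tauto)]; simp [chainE]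
  | G => simp [cartan]

private lemma chainE_nonpos {x y : ℕ} (h : x ≠ y) : chainE x y ≤ 0 := by
  unfold chainE
  rw [if_neg h]
  split <;> omega

private lemma cartan_offdiag (g : GType) {a b : Fin (rank g)} (h : a ≠ b) :
    cartan g a b ≤ 0 := by
  have hv : a.val ≠ b.val := fun hv => h (Fin.ext hv)
  cases g with
  | A n => exact chainE_nonpos hv
  | B n =>
      simp only [cartan]
      split
      · omega
      · exact chainE_nonpos hv
  | C n =>
      simp only [cartan]
      split
      · omega
      · exact chainE_nonpos hv
  | D n =>
      simp only [cartan]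
      by_cases h1 : ((a.val = n - 2 ∧ b.val = n) ∨ (a.val = n ∧ b.val = n - 2)) ∧ 2 ≤ n
      · rw [if_pos h1]; omega
      · rw [if_neg h1]
        by_cases h2 : a.val = n ∨ b.val = n
        · rw [if_pos h2, if_neg h]
        · rw [if_neg h2]; exact chainE_nonpos hv
  | G =>
      simp only [cartan]
      rw [if_neg h]
      split <;> omega

private def Sm (m : Multiset (ℕ × ℤ)) (i : ℕ) : ℤ :=
  (m.map fun s => ((min i s.1 : ℕ) : ℤ)).sum

private def Cm (m : Multiset (ℕ × ℤ)) (k : ℕ) : ℤ :=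
  (m.map fun s => if k ≤ s.1 then (1 : ℤ) else 0).sum

private lemma vac_def (g : GType) (lam : Wt g) (ν : Cfg g) (a : Fin (rank g)) (i : ℕ) :
    vac g lam ν a i = lam a - ∑ b, cartan g a b * Sm (ν b) i := rfl

private lemma Sm_shape {m m' : Multiset (ℕ × ℤ)} (h : m.map Prod.fst = m'.map Prod.fst)
    (i : ℕ) : Sm m i = Sm m' i := by
  have e : ∀ mm : Multiset (ℕ × ℤ),
      Sm mm i = ((mm.map Prod.fst).map fun j => ((min i j : ℕ) : ℤ)).sum := by
    intro mm; rw [Multiset.map_map]; rfl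
  rw [e, e, h]

private lemma Sm_cons (p : ℕ × ℤ) (m : Multiset (ℕ × ℤ)) (i : ℕ) :
    Sm (p ::ₘ m) i = ((min i p.1 : ℕ) : ℤ) + Sm m i := by
  simp [Sm]

private lemma Sm_zero (m : Multiset (ℕ × ℤ)) : Sm m 0 = 0 := by
  simp [Sm]

private lemma Sm_succ (m : Multiset (ℕ × ℤ)) (i : ℕ) :
    Sm m (i+1) = Sm m i + Cm m (i+1) := by
  unfold Sm Cm
  rw [← Multiset.sum_map_add]
  congr 1
  apply Multiset.map_congr rfl
  intro s _
  rcases le_or_gt (i+1) s.1 with h | h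
  · rw [if_pos h]
    have h1 : min (i+1) s.1 = i + 1 := by omega
    have h2 : min i s.1 = i := by omega
    rw [h1, h2]; push_cast; ring
  · rw [if_neg (by omega)]
    have h3 : min (i+1) s.1 = min i s.1 := by omega
    rw [h3]; ring

private lemma Cm_nonneg (m : Multiset (ℕ × ℤ)) (k : ℕ) : 0 ≤ Cm m k := by
  apply Multiset.sum_nonneg
  intro x hx
  obtain ⟨s, _, rfl⟩ := Multiset.mem_map.1 hx
  split <;> omega

private lemma Cm_mono (m : Multiset (ℕ × ℤ)) (k : ℕ) : Cm m (k+1) ≤ Cm m k :=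
  Multiset.sum_map_le_sum_map _ _ (fun s _ => by split_ifs with h1 h2 <;> omega)

private lemma Cm_eq_of_no_part {m : Multiset (ℕ × ℤ)} {k : ℕ}
    (h : ∀ s ∈ m, s.1 ≠ k) : Cm m (k+1) = Cm m k := by
  unfold Cm
  congr 1
  apply Multiset.map_congr rfl
  intro s hs
  have := h s hs
  split_ifs with h1 h2 <;> omega

private lemma psize_shape {m m' : Multiset (ℕ × ℤ)}
    (h : m.map Prod.fst = m'.map Prod.fst) : psize m = psize m' := by
  have e : ∀ mm : Multiset (ℕ × ℤ),
      psize mm = ((mm.map Prod.fst).map fun j : ℕ => (j : ℤ)).sum := by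
    intro mm; rw [Multiset.map_map]; rfl
  rw [e, e, h]

private lemma psize_cons (p : ℕ × ℤ) (m : Multiset (ℕ × ℤ)) :
    psize (p ::ₘ m) = p.1 + psize m := by
  simp [psize]

private lemma psize_nonneg (m : Multiset (ℕ × ℤ)) : 0 ≤ psize m := by
  apply Multiset.sum_nonneg
  intro x hx
  obtain ⟨s, _, rfl⟩ := Multiset.mem_map.1 hx
  exact Int.natCast_nonneg _

private lemma Sm_full {m : Multiset (ℕ × ℤ)} {i : ℕ} (h : ∀ s ∈ m, s.1 ≤ i) :
    Sm m i = psize m := by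
  unfold Sm psize
  congr 1
  apply Multiset.map_congr rfl
  intro s hs
  simp [min_eq_right (h s hs)]

private lemma vac_add_lam (g : GType) (lam : Wt g) (ν : Cfg g) (a : Fin (rank g)) (i : ℕ) :
    vac g lam ν a i = lam a + vac g (0 : Wt g) ν a i := by
  rw [vac_def, vac_def]
  simp only [Pi.zero_apply, zero_sub]
  ring

private lemma vac_zero_idx (g : GType) (lam : Wt g) (ν : Cfg g) (a : Fin (rank g)) :
    vac g lam ν a 0 = lam a := by
  rw [vac_def]
  simp [Sm_zero]

private lemma vac_shape {g : GType} {ν ν' : Cfg g}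
    (h : ∀ b, (ν' b).map Prod.fst = (ν b).map Prod.fst) (lam : Wt g)
    (a : Fin (rank g)) (i : ℕ) : vac g lam ν' a i = vac g lam ν a i := by
  rw [vac_def, vac_def]
  congr 1
  apply Finset.sum_congr rfl
  intro b _
  rw [Sm_shape (h b)]

private lemma vac_succ (g : GType) (lam : Wt g) (ν : Cfg g) (a : Fin (rank g)) (i : ℕ) :
    vac g lam ν a (i+1) = vac g lam ν a i - ∑ b, cartan g a b * Cm (ν b) (i+1) := by
  rw [vac_def, vac_def]
  have h : ∀ b ∈ Finset.univ, cartan g a b * Sm (ν b) (i+1)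
      = cartan g a b * Sm (ν b) i + cartan g a b * Cm (ν b) (i+1) :=
    fun b _ => by rw [Sm_succ]; ring
  rw [Finset.sum_congr rfl h, Finset.sum_add_distrib]
  ring

private lemma vac_concave (g : GType) (lam : Wt g) (ν : Cfg g) (a : Fin (rank g)) (i : ℕ)
    (h : ∀ s ∈ ν a, s.1 ≠ i + 1) :
    vac g lam ν a (i+2) - vac g lam ν a (i+1) ≤ vac g lam ν a (i+1) - vac g lam ν a i := by
  have e2 : vac g lam ν a (i+2)
      = vac g lam ν a (i+1) - ∑ b, cartan g a b * Cm (ν b) (i+2) := vac_succ g lam ν a (i+1)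
  have e1 : vac g lam ν a (i+1)
      = vac g lam ν a i - ∑ b, cartan g a b * Cm (ν b) (i+1) := vac_succ g lam ν a i
  have key : ∑ b, cartan g a b * Cm (ν b) (i+1) ≤ ∑ b, cartan g a b * Cm (ν b) (i+2) := by
    apply Finset.sum_le_sum
    intro b _
    by_cases hb : b = a
    · subst hb
      rw [Cm_eq_of_no_part h]
    · have h1 : cartan g a b ≤ 0 := cartan_offdiag g (fun e => hb e.symm)
      have h2 : Cm (ν b) (i+2) ≤ Cm (ν b) (i+1) := Cm_mono (ν b) (i+1)
      exact mul_le_mul_of_nonpos_left h2 h1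
  linarith

private lemma vac_diff (g : GType) (lam : Wt g) (ν ν' : Cfg g) (c : Fin (rank g))
    (hsh : ∀ b, b ≠ c → (ν' b).map Prod.fst = (ν b).map Prod.fst)
    (a : Fin (rank g)) (i : ℕ) :
    vac g lam ν' a i = vac g lam ν a i + cartan g a c * (Sm (ν c) i - Sm (ν' c) i) := by
  rw [vac_def, vac_def]
  have h : ∀ b ∈ Finset.univ, cartan g a b * Sm (ν' b) i
      = cartan g a b * Sm (ν b) i
        + (if b = c then cartan g a c * (Sm (ν' c) i - Sm (ν c) i) else 0) := by
    intro b _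
    by_cases hb : b = c
    · subst hb; rw [if_pos rfl]; ring
    · rw [if_neg hb, Sm_shape (hsh b hb)]; ring
  rw [Finset.sum_congr rfl h, Finset.sum_add_distrib, Finset.sum_ite_eq' Finset.univ c]
  simp only [Finset.mem_univ, if_true]
  ring

private def Wq (g : GType) (ν : Cfg g) (b : Fin (rank g)) : ℤ :=
  psize (ν b) - ∑ c, cartan g b c * psize (ν c)

private lemma vac_stable (g : GType) (lam : Wt g) (ν : Cfg g) (a : Fin (rank g)) {i : ℕ}
    (h : ∀ b, ∀ s ∈ ν b, s.1 ≤ i) :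
    vac g lam ν a i = lam a - psize (ν a) + Wq g ν a := by
  rw [vac_def]
  have h1 : ∀ b ∈ Finset.univ, cartan g a b * Sm (ν b) i = cartan g a b * psize (ν b) :=
    fun b _ => by rw [Sm_full (h b)]
  rw [Finset.sum_congr rfl h1]
  unfold Wq
  ring

private lemma concave_seq (p : ℕ → ℤ) (l M : ℕ) (χ : ℤ) (hlM : l < M)
    (hconc : ∀ i, l ≤ i → i + 2 ≤ M → p (i+2) - p (i+1) ≤ p (i+1) - p i)
    (h1 : χ ≤ p l) (h2 : χ + 1 ≤ p M) : χ + 1 ≤ p (l+1) := by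
  rcases le_or_gt 1 (p (l+1) - p l) with hσ | hσ
  · linarith
  · have hσ0 : p (l+1) - p l ≤ 0 := by omega
    have key : ∀ d, l + 1 + d ≤ M → p (l+1+d) ≤ p (l+1) ∧ p (l+1+d) - p (l+d) ≤ 0 := by
      intro d
      induction d with
      | zero =>
          intro _
          exact ⟨le_refl _, by simpa using hσ0⟩
      | succ d ih =>
          intro hd
          obtain ⟨ih1, ih2⟩ := ih (by omega)
          have hc := hconc (l+d) (by omega) (by omega)
          have e1 : l + 1 + d = l + d + 1 := by omega
          have e2 : l + 1 + (d+1) = l + d + 2 := by omega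
          have e3 : l + (d+1) = l + d + 1 := by omega
          rw [e1] at ih1 ih2
          rw [e2, e3]
          exact ⟨by linarith, by linarith⟩
    obtain ⟨d, rfl⟩ : ∃ d, M = l + 1 + d := ⟨M - (l+1), by omega⟩
    have := (key d (le_refl _)).1
    linarith

private lemma exists_min_by {β : Type} [LinearOrder β] (f : ℕ × ℤ → β)
    (m : Multiset (ℕ × ℤ)) : m = 0 ∨ ∃ p, p ∈ m ∧ ∀ s ∈ m, f p ≤ f s := by
  induction m using Multiset.induction_on with
  | empty => exact Or.inl rfl
  | cons a t ih =>
      right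
      rcases ih with rfl | ⟨p, hp, hm⟩
      · refine ⟨a, Multiset.mem_cons_self a 0, ?_⟩
        intro s hs
        rcases Multiset.mem_cons.1 hs with rfl | hmem
        · exact le_rfl
        · exact absurd hmem (Multiset.notMem_zero s)
      · rcases le_total (f a) (f p) with hap | hap
        · refine ⟨a, Multiset.mem_cons_self a t, ?_⟩
          intro s hs
          rcases Multiset.mem_cons.1 hs with rfl | hmem
          · exact le_rfl
          · exact le_trans hap (hm s hmem)
        · refine ⟨p, Multiset.mem_cons_of_mem hp, ?_⟩
          intro s hs
          rcases Multiset.mem_cons.1 hs with rfl | hmem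
          · exact hap
          · exact hm s hmem

private def E2 (g : GType) (ν : Cfg g) : Prop :=
  ∀ b, 0 ≤ Wq g ν b ∨ ∃ s ∈ ν b, s.2 ≤ Wq g ν b

private lemma key_vac (g : GType) (lam : Wt g) (ν : Cfg g) (a : Fin (rank g))
    (hval : Valid g lam ν) (hlam : psize (ν a) + 1 ≤ lam a)
    (hE2 : 0 ≤ Wq g ν a ∨ ∃ s ∈ ν a, s.2 ≤ Wq g ν a)
    (l : ℕ) (χ : ℤ) (hχ : χ ≤ 0) (hpl : χ ≤ vac g lam ν a l)
    (hmin : ∀ s ∈ ν a, χ ≤ s.2) (hmax : ∀ s ∈ ν a, s.2 = χ → s.1 ≤ l) :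
    χ + 1 ≤ vac g lam ν a (l+1) := by
  have hWχ : χ ≤ Wq g ν a := by
    rcases hE2 with hE | ⟨s, hs, hle⟩
    · linarith
    · exact le_trans (hmin s hs) hle
  by_cases hlong : ∃ s ∈ ν a, l < s.1
  · have hne : (ν a).filter (fun s => l < s.1) ≠ 0 := by
      obtain ⟨s, hs, hl⟩ := hlong
      intro h0
      have hmem : s ∈ (ν a).filter (fun s => l < s.1) := Multiset.mem_filter.2 ⟨hs, hl⟩
      rw [h0] at hmem
      exact Multiset.notMem_zero s hmem
    rcases exists_min_by (fun s => (s.1 : ℤ)) ((ν a).filter (fun s => l < s.1)) with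
      h0 | ⟨q, hq, hqmin⟩
    · exact absurd h0 hne
    obtain ⟨hqmem, hql⟩ := Multiset.mem_filter.1 hq
    refine concave_seq (fun i => vac g lam ν a i) l q.1 χ hql ?_ hpl ?_
    · intro i hi hi2
      show vac g lam ν a (i+2) - vac g lam ν a (i+1) ≤ vac g lam ν a (i+1) - vac g lam ν a i
      refine vac_concave g lam ν a i ?_
      intro s hs hcontra
      have hsf : s ∈ (ν a).filter (fun s => l < s.1) := Multiset.mem_filter.2 ⟨hs, by omega⟩
      have := hqmin s hsf
      omega
    · show χ + 1 ≤ vac g lam ν a q.1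
      have hv := hval a q hqmem
      have hm := hmin q hqmem
      have hstrict : χ + 1 ≤ q.2 := by
        rcases eq_or_lt_of_le hm with he | hlt
        · exact absurd (hmax q hqmem he.symm) (by omega)
        · omega
      exact le_trans hstrict hv
  · push_neg at hlong
    have hbig : ∀ b, ∀ s ∈ ν b, s.1 ≤ l + 1 + (∑ b', ((ν b').map Prod.fst).sum) := by
      intro b s hs
      have hb1 : s.1 ≤ ((ν b).map Prod.fst).sum :=
        Multiset.single_le_sum (fun x _ => Nat.zero_le x) _ (Multiset.mem_map_of_mem _ hs)
      have hb2 : ((ν b).map Prod.fst).sum ≤ ∑ b', ((ν b').map Prod.fst).sum :=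
        Finset.single_le_sum (f := fun b' => ((ν b').map Prod.fst).sum)
          (fun b' _ => Nat.zero_le _) (Finset.mem_univ b)
      omega
    refine concave_seq (fun i => vac g lam ν a i) l
      (l + 1 + (∑ b', ((ν b').map Prod.fst).sum)) χ (by omega) ?_ hpl ?_
    · intro i hi hi2
      show vac g lam ν a (i+2) - vac g lam ν a (i+1) ≤ vac g lam ν a (i+1) - vac g lam ν a i
      refine vac_concave g lam ν a i ?_
      intro s hs hcontra
      have := hlong s hs
      omega
    · show χ + 1 ≤ vac g lam ν a (l + 1 + (∑ b', ((ν b').map Prod.fst).sum))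
      rw [vac_stable g lam ν a hbig]
      linarith

private lemma fRel_shape (g : GType) {c : Fin (rank g)} {ν ν' : Cfg g} (hf : fRel g c ν ν') :
    (∀ b, b ≠ c → (ν' b).map Prod.fst = (ν b).map Prod.fst) ∧
      psize (ν' c) = psize (ν c) + 1 ∧
      (∀ i, Sm (ν c) i ≤ Sm (ν' c) i ∧ Sm (ν' c) i ≤ Sm (ν c) i + 1) := by
  rcases hf with ⟨hpos, heq, heqa⟩ | ⟨l, x, rest, hx0, hcons, hmin, hmax, heq, heqa⟩
  · refine ⟨?_, ?_, ?_⟩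
    · intro b hb
      rw [heq b hb, Multiset.map_map]
      exact Multiset.map_congr rfl (fun s _ => rfl)
    · rw [heqa, psize_cons]
      have h1 : psize ((ν c).map fun s =>
          (s.1, s.2 + vac g 0 ν' c s.1 - vac g 0 ν c s.1)) = psize (ν c) := by
        apply psize_shape
        rw [Multiset.map_map]
        exact Multiset.map_congr rfl (fun s _ => rfl)
      rw [h1]
      push_cast
      ring
    · intro i
      rw [heqa, Sm_cons]
      have h1 : Sm ((ν c).map fun s =>
          (s.1, s.2 + vac g 0 ν' c s.1 - vac g 0 ν c s.1)) i = Sm (ν c) i := by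
        apply Sm_shape
        rw [Multiset.map_map]
        exact Multiset.map_congr rfl (fun s _ => rfl)
      rw [h1]
      have h2 : min i (1 : ℕ) ≤ 1 := by omega
      constructor <;> [skip; skip] <;> push_cast <;> omega
  · have hSrest : ∀ i, Sm (ν' c) i = ((min i (l+1) : ℕ) : ℤ) + Sm rest i := by
      intro i
      rw [heqa, Sm_cons]
      have h1 : Sm (rest.map fun s =>
          (s.1, s.2 + vac g 0 ν' c s.1 - vac g 0 ν c s.1)) i = Sm rest i := by
        apply Sm_shape
        rw [Multiset.map_map]
        exact Multiset.map_congr rfl (fun s _ => rfl)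
      rw [h1]
    have hSold : ∀ i, Sm (ν c) i = ((min i l : ℕ) : ℤ) + Sm rest i := by
      intro i
      rw [hcons, Sm_cons]
    refine ⟨?_, ?_, ?_⟩
    · intro b hb
      rw [heq b hb, Multiset.map_map]
      exact Multiset.map_congr rfl (fun s _ => rfl)
    · have h1 : psize (rest.map fun s =>
          (s.1, s.2 + vac g 0 ν' c s.1 - vac g 0 ν c s.1)) = psize rest := by
        apply psize_shape
        rw [Multiset.map_map]
        exact Multiset.map_congr rfl (fun s _ => rfl)
      rw [heqa, psize_cons, h1, hcons, psize_cons]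
      push_cast
      ring
    · intro i
      rw [hSrest i, hSold i]
      constructor <;> push_cast <;> omega

private lemma E2_step (g : GType) {c : Fin (rank g)} {ν ν' : Cfg g} (hf : fRel g c ν ν')
    (hE : E2 g ν) : E2 g ν' := by
  obtain ⟨hsh, hpc, hSb⟩ := fRel_shape g hf
  have hps : ∀ b, psize (ν' b) = psize (ν b) + (if b = c then 1 else 0) := by
    intro b
    by_cases hb : b = c
    · subst hb; rw [hpc, if_pos rfl]
    · rw [psize_shape (hsh b hb), if_neg hb, add_zero]
  have hW : ∀ b, Wq g ν' b = Wq g ν b + (if b = c then 1 else 0) - cartan g b c := by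
    intro b
    unfold Wq
    rw [hps b]
    have h1 : ∀ c' ∈ Finset.univ, cartan g b c' * psize (ν' c')
        = cartan g b c' * psize (ν c') + (if c' = c then cartan g b c else 0) := by
      intro c' _
      rw [hps c']
      by_cases hc : c' = c
      · subst hc; rw [if_pos rfl, if_pos rfl]; ring
      · rw [if_neg hc, if_neg hc]; ring
    rw [Finset.sum_congr rfl h1, Finset.sum_add_distrib, Finset.sum_ite_eq' Finset.univ c]
    simp only [Finset.mem_univ, if_true]
    ring
  intro b
  by_cases hb : b = c
  · subst hb
    right
    rcases hf with ⟨hpos, heq, heqa⟩ | ⟨l, x, rest, hx0, hcons, hmin, hmax, heq, heqa⟩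
    · refine ⟨(1, -1), by rw [heqa]; exact Multiset.mem_cons_self _ _, ?_⟩
      have h0 : 0 ≤ Wq g ν b := by
        rcases hE b with hE1 | ⟨s, hs, hle⟩
        · exact hE1
        · have := hpos s hs; omega
      rw [hW b, cartan_diag]
      simp only [if_pos rfl]
      show (-1 : ℤ) ≤ Wq g ν b + 1 - 2
      omega
    · refine ⟨(l+1, x-1), by rw [heqa]; exact Multiset.mem_cons_self _ _, ?_⟩
      have h0 : x ≤ Wq g ν b := by
        rcases hE b with hE1 | ⟨s, hs, hle⟩
        · omega
        · exact le_trans (hmin s hs) hle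
      rw [hW b, cartan_diag]
      simp only [if_pos rfl]
      show x - 1 ≤ Wq g ν b + 1 - 2
      omega
  · have hA : cartan g b c ≤ 0 := cartan_offdiag g hb
    rcases hE b with hE1 | ⟨s, hs, hle⟩
    · left
      rw [hW b, if_neg hb]
      omega
    · right
      have heqb : ν' b = (ν b).map fun s =>
          (s.1, s.2 + vac g (0 : Wt g) ν' b s.1 - vac g (0 : Wt g) ν b s.1) := by
        rcases hf with ⟨_, heq, _⟩ | ⟨_, _, _, _, _, _, _, heq, _⟩ <;> exact heq b hb
      refine ⟨_, by rw [heqb]; exact Multiset.mem_map_of_mem _ hs, ?_⟩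
      have hd := vac_diff g (0 : Wt g) ν ν' c hsh b s.1
      have hSS := hSb s.1
      have hdle : vac g (0 : Wt g) ν' b s.1 - vac g (0 : Wt g) ν b s.1 ≤ -cartan g b c := by
        rw [hd]
        have h1 : (-1 : ℤ) ≤ Sm (ν c) s.1 - Sm (ν' c) s.1 := by linarith [hSS.2]
        have := mul_le_mul_of_nonpos_left h1 hA
        linarith
      rw [hW b, if_neg hb]
      simp only
      linarith

private lemma E2_of_poly {g : GType} {lam : Wt g} {ν : Cfg g} (h : RCPoly g lam ν) :
    E2 g ν := by
  induction h with
  | empty =>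
      intro b
      left
      simp [Wq, emptyCfg, psize]
  | step hp hf hv ih => exact E2_step _ hf ih

private lemma valid_of_poly {g : GType} {lam : Wt g} {ν : Cfg g} (h : RCPoly g lam ν) :
    Valid g lam ν := by
  cases h with
  | empty => intro a s hs; simp [emptyCfg] at hs
  | step _ _ hv => exact hv

private lemma lambdaNu_ge (g : GType) (ν : Cfg g) (a : Fin (rank g)) :
    psize (ν a) + 1 ≤ lambdaNu g ν a := by
  cases g with
  | A n => simp [lambdaNu]
  | B n =>
      simp only [lambdaNu]
      split
      · have := psize_nonneg (ν a); linarith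
      · exact le_refl _
  | C n => simp [lambdaNu]
  | D n =>
      simp only [lambdaNu]
      split
      · next hcond =>
          rcases hcond with hcond | hcond
          · have e : ν a = ν ⟨n - 1, by simp only [rank]; omega⟩ := by
              congr 1
              exact Fin.ext hcond
            rw [e]
            exact (add_le_add_iff_right 1).2 (le_max_left _ _)
          · have e : ν a = ν ⟨n, by simp only [rank]; omega⟩ := by
              congr 1
              exact Fin.ext hcond
            rw [e]
            exact (add_le_add_iff_right 1).2 (le_max_right _ _)
      · exact le_refl _
  | G => simp [lambdaNu]

private lemma exists_fRel (g : GType) (a : Fin (rank g)) (ν : Cfg g) :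
    ∃ ν', fRel g a ν ν' := by
  classical
  by_cases hpos : ∀ s ∈ ν a, 0 < s.2
  · set κ : Cfg g := Function.update ν a ((1, -1) ::ₘ ν a) with hκdef
    set ν' : Cfg g := Function.update
      (fun b => (ν b).map fun s => (s.1, s.2 + vac g 0 κ b s.1 - vac g 0 ν b s.1)) a
      ((1, -1) ::ₘ ((ν a).map fun s => (s.1, s.2 + vac g 0 κ a s.1 - vac g 0 ν a s.1)))
      with hν'def
    have hκa : κ a = (1, -1) ::ₘ ν a := Function.update_self _ _ _
    have hκb : ∀ b, b ≠ a → κ b = ν b := fun b hb => Function.update_of_ne hb _ _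
    have hν'a : ν' a = (1, -1) ::ₘ ((ν a).map fun s =>
        (s.1, s.2 + vac g 0 κ a s.1 - vac g 0 ν a s.1)) := Function.update_self _ _ _
    have hν'b : ∀ b, b ≠ a → ν' b = (ν b).map fun s =>
        (s.1, s.2 + vac g 0 κ b s.1 - vac g 0 ν b s.1) := fun b hb =>
      Function.update_of_ne hb _ _
    have hsh : ∀ b, (ν' b).map Prod.fst = (κ b).map Prod.fst := by
      intro b
      by_cases hb : b = a
      · subst hb
        rw [hν'a, hκa, Multiset.map_cons, Multiset.map_cons, Multiset.map_map]
        congr 1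
      · rw [hν'b b hb, hκb b hb, Multiset.map_map]
        exact Multiset.map_congr rfl (fun s _ => rfl)
    have hvv : ∀ b (i : ℕ), vac g 0 ν' b i = vac g 0 κ b i :=
      fun b i => vac_shape hsh 0 b i
    refine ⟨ν', Or.inl ⟨hpos, ?_, ?_⟩⟩
    · intro b hb
      rw [hν'b b hb]
      exact Multiset.map_congr rfl (fun s _ => by rw [hvv b s.1])
    · rw [hν'a]
      congr 1
      exact Multiset.map_congr rfl (fun s _ => by rw [hvv a s.1])
  · push_neg at hpos
    obtain ⟨s₀, hs₀, hs₀2⟩ := hpos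
    rcases exists_min_by (fun s => s.2) (ν a) with h0 | ⟨p, hp, hpmin⟩
    · rw [h0] at hs₀; exact absurd hs₀ (Multiset.notMem_zero _)
    have hx0 : p.2 ≤ 0 := le_trans (hpmin s₀ hs₀) hs₀2
    have hfil : p ∈ (ν a).filter (fun s => s.2 = p.2) := Multiset.mem_filter.2 ⟨hp, rfl⟩
    rcases exists_min_by (fun s => -(s.1 : ℤ)) ((ν a).filter (fun s => s.2 = p.2)) with
      h0 | ⟨q, hq, hqmax⟩
    · rw [h0] at hfil; exact absurd hfil (Multiset.notMem_zero _)
    obtain ⟨hqmem, hqx⟩ := Multiset.mem_filter.1 hq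
    have hmax : ∀ s ∈ ν a, s.2 = p.2 → s.1 ≤ q.1 := by
      intro s hs hsx
      have := hqmax s (Multiset.mem_filter.2 ⟨hs, hsx⟩)
      omega
    have hmem : (q.1, p.2) ∈ ν a := by
      have e : (q.1, p.2) = q := by rw [← hqx]
      rw [e]; exact hqmem
    set rest : Multiset (ℕ × ℤ) := (ν a).erase (q.1, p.2) with hrestdef
    have hcons : ν a = (q.1, p.2) ::ₘ rest := (Multiset.cons_erase hmem).symm
    set κ : Cfg g := Function.update ν a ((q.1 + 1, p.2 - 1) ::ₘ rest) with hκdef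
    set ν' : Cfg g := Function.update
      (fun b => (ν b).map fun s => (s.1, s.2 + vac g 0 κ b s.1 - vac g 0 ν b s.1)) a
      ((q.1 + 1, p.2 - 1) ::ₘ (rest.map fun s =>
        (s.1, s.2 + vac g 0 κ a s.1 - vac g 0 ν a s.1)))
      with hν'def
    have hκa : κ a = (q.1 + 1, p.2 - 1) ::ₘ rest := Function.update_self _ _ _
    have hκb : ∀ b, b ≠ a → κ b = ν b := fun b hb => Function.update_of_ne hb _ _
    have hν'a : ν' a = (q.1 + 1, p.2 - 1) ::ₘ (rest.map fun s =>
        (s.1, s.2 + vac g 0 κ a s.1 - vac g 0 ν a s.1)) := Function.update_self _ _ _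
    have hν'b : ∀ b, b ≠ a → ν' b = (ν b).map fun s =>
        (s.1, s.2 + vac g 0 κ b s.1 - vac g 0 ν b s.1) := fun b hb =>
      Function.update_of_ne hb _ _
    have hsh : ∀ b, (ν' b).map Prod.fst = (κ b).map Prod.fst := by
      intro b
      by_cases hb : b = a
      · subst hb
        rw [hν'a, hκa, Multiset.map_cons, Multiset.map_cons, Multiset.map_map]
        congr 1
      · rw [hν'b b hb, hκb b hb, Multiset.map_map]
        exact Multiset.map_congr rfl (fun s _ => rfl)
    have hvv : ∀ b (i : ℕ), vac g 0 ν' b i = vac g 0 κ b i :=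
      fun b i => vac_shape hsh 0 b i
    refine ⟨ν', Or.inr ⟨q.1, p.2, rest, hx0, hcons, hpmin, hmax, ?_, ?_⟩⟩
    · intro b hb
      rw [hν'b b hb]
      exact Multiset.map_congr rfl (fun s _ => by rw [hvv b s.1])
    · rw [hν'a]
      congr 1
      exact Multiset.map_congr rfl (fun s _ => by rw [hvv a s.1])

end Statement4Aux

/-- if `(ν, J, λ) ∈ RC^{EV}` then `f_a (ν, J) ≠ 0` in `RC(λ)`:
applying the lowering operator `f_a` to an extra valid rigged configuration
produces a rigged configuration which is still valid for `λ`. -/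
theorem f_nonzero_on_extra_valid (g : GType) (a : Fin (rank g)) (ν : Cfg g)
    (lam : Wt g) (h : RCEV g ν lam) :
    (∃ ν', fRel g a ν ν') ∧ ∀ ν', fRel g a ν ν' → Valid g lam ν' := by
  obtain ⟨hdom, hpoly, hge⟩ := h
  have hval : Valid g lam ν := valid_of_poly hpoly
  have hE2 : E2 g ν := E2_of_poly hpoly
  have hlam : ∀ b, psize (ν b) + 1 ≤ lam b :=
    fun b => le_trans (lambdaNu_ge g ν b) (hge b)
  refine ⟨exists_fRel g a ν, ?_⟩
  intro ν' hf
  obtain ⟨hsh, -, -⟩ := fRel_shape g hf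
  have hcolab : ∀ (b : Fin (rank g)) (t : ℕ × ℤ), t ∈ ν b →
      t.2 + vac g (0 : Wt g) ν' b t.1 - vac g (0 : Wt g) ν b t.1 ≤ vac g lam ν' b t.1 := by
    intro b t ht
    rw [vac_add_lam g lam ν' b t.1]
    have hv := hval b t ht
    rw [vac_add_lam g lam ν b t.1] at hv
    linarith
  rcases hf with ⟨hpos, heq, heqa⟩ | ⟨l, x, rest, hx0, hcons, hmin, hmax, heq, heqa⟩
  · -- new string (1, -1) added
    have hkey : (1 : ℤ) ≤ vac g lam ν a 1 := by
      have h0 : (0 : ℤ) ≤ vac g lam ν a 0 := by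
        rw [vac_zero_idx]
        have := psize_nonneg (ν a)
        linarith [hlam a]
      have := key_vac g lam ν a hval (hlam a) (hE2 a) 0 0 le_rfl h0
        (fun s hs => le_of_lt (hpos s hs))
        (fun s hs he => absurd he (by have := hpos s hs; omega))
      simpa using this
    have hnew : vac g lam ν' a 1 = vac g lam ν a 1 - 2 := by
      have hd := vac_diff g lam ν ν' a hsh a 1
      have hS' : Sm (ν' a) 1 = 1 + Sm (ν a) 1 := by
        have hsha : (ν' a).map Prod.fst
            = (((1, -1) : ℕ × ℤ) ::ₘ ν a).map Prod.fst := by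
          rw [heqa, Multiset.map_cons, Multiset.map_cons, Multiset.map_map]
          congr 1
        rw [Sm_shape hsha, Sm_cons]
        norm_num
      rw [hd, hS', cartan_diag]
      ring
    intro b s hs
    by_cases hb : b = a
    · subst hb
      rw [heqa] at hs
      rcases Multiset.mem_cons.1 hs with rfl | hs'
      · show (-1 : ℤ) ≤ vac g lam ν' b 1
        rw [hnew]
        linarith
      · obtain ⟨t, ht, rfl⟩ := Multiset.mem_map.1 hs'
        exact hcolab b t ht
    · rw [heq b hb] at hs
      obtain ⟨t, ht, rfl⟩ := Multiset.mem_map.1 hs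
      exact hcolab b t ht
  · -- string (l, x) grows to (l+1, x-1)
    have hmem : ((l, x) : ℕ × ℤ) ∈ ν a := by rw [hcons]; exact Multiset.mem_cons_self _ _
    have hkey : x + 1 ≤ vac g lam ν a (l+1) := by
      have hpl : x ≤ vac g lam ν a l := hval a (l, x) hmem
      exact key_vac g lam ν a hval (hlam a) (hE2 a) l x hx0 hpl hmin hmax
    have hnew : vac g lam ν' a (l+1) = vac g lam ν a (l+1) - 2 := by
      have hd := vac_diff g lam ν ν' a hsh a (l+1)
      have hS' : Sm (ν' a) (l+1) = ((l : ℤ) + 1) + Sm rest (l+1) := by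
        have hsha : (ν' a).map Prod.fst
            = (((l+1, x-1) : ℕ × ℤ) ::ₘ rest).map Prod.fst := by
          rw [heqa, Multiset.map_cons, Multiset.map_cons, Multiset.map_map]
          congr 1
        rw [Sm_shape hsha, Sm_cons]
        have : min (l+1) (l+1) = l + 1 := by omega
        simp only
        rw [this]
        push_cast
        ring
      have hS : Sm (ν a) (l+1) = (l : ℤ) + Sm rest (l+1) := by
        rw [hcons, Sm_cons]
        have : min (l+1) l = l := by omega
        simp only
        rw [this]
      rw [hd, hS', hS, cartan_diag]
      ring
    intro b s hs
    by_cases hb : b = a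
    · subst hb
      rw [heqa] at hs
      rcases Multiset.mem_cons.1 hs with rfl | hs'
      · show x - 1 ≤ vac g lam ν' b (l+1)
        rw [hnew]
        linarith
      · obtain ⟨t, ht, rfl⟩ := Multiset.mem_map.1 hs'
        have htν : t ∈ ν b := by rw [hcons]; exact Multiset.mem_cons_of_mem ht
        exact hcolab b t htν
    · rw [heq b hb] at hs
      obtain ⟨t, ht, rfl⟩ := Multiset.mem_map.1 hs
      exact hcolab b t ht

end RCMLT
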